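/- For any c > 0, the function f(t) = (1 + c - (c^t + c^{1-t})) / (t(1-t)) is convex on the open interval (0,1). -/

import Mathlib

open MeasureTheory Real Set

lemma convexOn_k_exp (k m q : ℝ) (hk : 0 ≤ k) :
    ConvexOn ℝ Set.univ (fun t : ℝ => k * Real.exp (m * t + q)) := by
  refine ⟨convex_univ, fun x _ y _ a b ha hb hab => ?_⟩
  have h := convexOn_exp.2 (Set.mem_univ (m * x + q)) (Set.mem_univ (m * y + q)) ha hb hab
  simp only [smul_eq_mul] at h ⊢
  have harg : m * (a * x + b * y) + q = a * (m * x + q) + b * (m * y + q) := by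
    linear_combination -q * hab
  rw [harg]
  nlinarith [mul_le_mul_of_nonneg_left h hk]

lemma convexOn_integral_univ {α : Type*} [MeasurableSpace α] {μ : Measure α}
    (g : α → ℝ → ℝ) (hconv : ∀ ω, ConvexOn ℝ Set.univ (g ω))
    (hint : ∀ t : ℝ, Integrable (fun ω => g ω t) μ) :
    ConvexOn ℝ Set.univ (fun t => ∫ ω, g ω t ∂μ) := by
  refine ⟨convex_univ, fun x _ y _ a b ha hb hab => ?_⟩
  simp only [smul_eq_mul]
  have h1 : ∀ ω, g ω (a * x + b * y) ≤ a * g ω x + b * g ω y := fun ω => by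
    simpa using (hconv ω).2 (Set.mem_univ x) (Set.mem_univ y) ha hb hab
  calc ∫ ω, g ω (a * x + b * y) ∂μ
      ≤ ∫ ω, (a * g ω x + b * g ω y) ∂μ :=
        integral_mono (hint _) (((hint x).const_mul a).add ((hint y).const_mul b)) h1
    _ = a * ∫ ω, g ω x ∂μ + b * ∫ ω, g ω y ∂μ := by
        rw [integral_add ((hint x).const_mul a) ((hint y).const_mul b),
          integral_const_mul, integral_const_mul]

theorem heinz_f_convex (c : ℝ) (hc : 0 < c) :
    ConvexOn ℝ (Set.Ioo (0:ℝ) 1)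
      (fun t : ℝ => (1 + c - (c ^ t + c ^ (1 - t))) / (t * (1 - t))) := by
  by_cases hc1 : c = 1
  · subst hc1
    refine (convexOn_const (0:ℝ) (convex_Ioo 0 1)).congr fun t ht => ?_
    simp [Real.one_rpow]
  set a : ℝ := Real.log c with ha
  have ha0 : a ≠ 0 := by
    intro h
    rcases Real.log_eq_zero.mp h with h | h | h
    · exact hc.ne' h
    · exact hc1 h
    · linarith
  set S : Set (ℝ × ℝ) := Set.Icc (0:ℝ) 1 ×ˢ Set.Icc (0:ℝ) 1 with hS
  set g : ℝ × ℝ → ℝ → ℝ := fun ω t => a ^ 2 * Real.exp (a * (ω.1 - ω.2) * t + a * ω.2) with hg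
  have hint : ∀ t : ℝ, Integrable (fun ω => g ω t) (volume.restrict S) := by
    intro t
    have hcont : Continuous fun ω : ℝ × ℝ => g ω t := by
      apply Continuous.mul continuous_const
      exact Real.continuous_exp.comp (by fun_prop)
    exact hcont.continuousOn.integrableOn_compact (isCompact_Icc.prod isCompact_Icc)
  have hconvG : ConvexOn ℝ Set.univ (fun t => ∫ ω in S, g ω t) :=
    convexOn_integral_univ g (fun ω => convexOn_k_exp _ _ _ (sq_nonneg a)) hint
  refine ((hconvG.subset (Set.subset_univ _) (convex_Ioo 0 1)).congr ?_)
  intro t ht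
  obtain ⟨ht0, ht1⟩ := ht
  have ht1' : (0:ℝ) < 1 - t := by linarith
  have hsplit : ∀ ω : ℝ × ℝ, g ω t =
      (a * Real.exp (a * t * ω.1)) * (a * Real.exp (a * (1 - t) * ω.2)) := by
    intro ω
    simp only [hg]
    rw [show a * (ω.1 - ω.2) * t + a * ω.2 = a * t * ω.1 + a * (1 - t) * ω.2 by ring,
      Real.exp_add]
    ring
  have hone : ∀ s : ℝ, s ≠ 0 →
      (∫ u in Set.Icc (0:ℝ) 1, a * Real.exp (a * s * u)) = (Real.exp (a * s) - 1) / s := by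
    intro s hs
    have has : a * s ≠ 0 := mul_ne_zero ha0 hs
    rw [MeasureTheory.integral_Icc_eq_integral_Ioc,
      ← intervalIntegral.integral_of_le (zero_le_one), intervalIntegral.integral_const_mul]
    have key : (∫ u in (0:ℝ)..1, Real.exp (u * (a * s)))
        = (a * s)⁻¹ • (Real.exp (a * s) - 1) := by
      rw [intervalIntegral.integral_comp_mul_right Real.exp has, integral_exp]
      norm_num
    simp only [mul_comm (a * s)] at key ⊢
    rw [key, smul_eq_mul]
    field_simp
  have hE : Real.exp (a * t) * Real.exp (a * (1 - t)) = c := by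
    rw [← Real.exp_add, show a * t + a * (1 - t) = a by ring, ha, Real.exp_log hc]
  have hct : c ^ t = Real.exp (a * t) := by
    rw [Real.rpow_def_of_pos hc]
  have hct' : c ^ (1 - t) = Real.exp (a * (1 - t)) := by
    rw [Real.rpow_def_of_pos hc]
  show (∫ ω in S, g ω t) = (1 + c - (c ^ t + c ^ (1 - t))) / (t * (1 - t))
  calc (∫ ω in S, g ω t)
      = (∫ u in Set.Icc (0:ℝ) 1, a * Real.exp (a * t * u)) *
        ∫ v in Set.Icc (0:ℝ) 1, a * Real.exp (a * (1 - t) * v) := by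
        simp only [hsplit]
        rw [hS, MeasureTheory.Measure.volume_eq_prod]
        exact MeasureTheory.setIntegral_prod_mul (fun u => a * Real.exp (a * t * u))
          (fun v => a * Real.exp (a * (1 - t) * v)) _ _
    _ = ((Real.exp (a * t) - 1) / t) * ((Real.exp (a * (1 - t)) - 1) / (1 - t)) := by
        rw [hone t ht0.ne', hone (1 - t) ht1'.ne']
    _ = (1 + c - (c ^ t + c ^ (1 - t))) / (t * (1 - t)) := by
        rw [hct, hct', div_mul_div_comm]
        congr 1
        linear_combination hE
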